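/- Let T₁₁, T₂₁, T₂₂ be matrices over a field of sizes ν₁×μ₁, ν₂×μ₁, ν₂×μ₂ respectively. Then the minimal rank over all matrices X of size ν₁×μ₂ of the block matrix [[T₁₁, X], [T₂₁, T₂₂]] equals rank[T₁₁; T₂₁] + rank[T₂₁ T₂₂] − rank T₂₁. -/

import Mathlib

open Matrix LinearMap Submodule Module

section MinRankAux

variable {F : Type*} [Field F] {ν₁ ν₂ μ₁ μ₂ : ℕ}

private lemma exists_genInv {m n : ℕ} (C : Matrix (Fin m) (Fin n) F) :
    ∃ G : Matrix (Fin n) (Fin m) F, C * G * C = C := by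
  set f := Matrix.toLin' C with hf
  obtain ⟨h, hh⟩ := f.rangeRestrict.exists_rightInverse_of_surjective
    (LinearMap.range_eq_top.2 f.surjective_rangeRestrict)
  obtain ⟨q, hq⟩ := Submodule.exists_isCompl (LinearMap.range f)
  refine ⟨LinearMap.toMatrix' (h ∘ₗ (LinearMap.range f).linearProjOfIsCompl q hq), ?_⟩
  apply Matrix.toLin'.injective
  rw [Matrix.toLin'_mul, Matrix.toLin'_mul, Matrix.toLin'_toMatrix']
  refine LinearMap.ext fun x => ?_
  have h1 : (LinearMap.range f).linearProjOfIsCompl q hq (f x) =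
      ⟨f x, LinearMap.mem_range_self f x⟩ :=
    Submodule.linearProjOfIsCompl_apply_left hq ⟨f x, LinearMap.mem_range_self f x⟩
  have h2 : ∀ v : LinearMap.range f, f (h v) = (v : (Fin m) → F) := by
    intro v
    have := congrFun (congrArg (DFunLike.coe) hh) v
    simpa [Subtype.ext_iff] using congrArg (Subtype.val) this
  simp only [LinearMap.comp_apply, h1, h2, ← hf]

private lemma range_fromCols_eq (C : Matrix (Fin ν₂) (Fin μ₁) F)
    (D : Matrix (Fin ν₂) (Fin μ₂) F) :
    LinearMap.range (fromCols C D).mulVecLin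
      = LinearMap.range C.mulVecLin ⊔ LinearMap.range D.mulVecLin := by
  apply le_antisymm
  · rintro _ ⟨v, rfl⟩
    rw [mulVecLin_apply, ← Sum.elim_comp_inl_inr v, fromCols_mulVec_sumElim]
    exact Submodule.add_mem_sup ⟨_, rfl⟩ ⟨_, rfl⟩
  · apply sup_le <;> rintro _ ⟨x, rfl⟩
    · exact ⟨Sum.elim x 0, by simp⟩
    · exact ⟨Sum.elim 0 x, by simp⟩

private lemma range_fromBlocks_eq (A : Matrix (Fin ν₁) (Fin μ₁) F)
    (Z : Matrix (Fin ν₁) (Fin μ₂) F)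
    (C : Matrix (Fin ν₂) (Fin μ₁) F) (D : Matrix (Fin ν₂) (Fin μ₂) F) :
    LinearMap.range (fromBlocks A Z C D).mulVecLin
      = LinearMap.range (fromRows A C).mulVecLin ⊔ LinearMap.range (fromRows Z D).mulVecLin := by
  have key : ∀ v : Fin μ₁ ⊕ Fin μ₂ → F, fromBlocks A Z C D *ᵥ v
      = fromRows A C *ᵥ (v ∘ Sum.inl) + fromRows Z D *ᵥ (v ∘ Sum.inr) := by
    intro v
    rw [fromBlocks_mulVec]
    funext i; cases i <;> simp
  apply le_antisymm
  · rintro _ ⟨v, rfl⟩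
    rw [mulVecLin_apply, key]
    exact Submodule.add_mem_sup ⟨_, rfl⟩ ⟨_, rfl⟩
  · apply sup_le <;> rintro _ ⟨x, rfl⟩
    · exact ⟨Sum.elim x 0, by simp [key]⟩
    · exact ⟨Sum.elim 0 x, by simp [key]⟩

private lemma finrank_map_add_finrank_inf_ker {M N : Type*} [AddCommGroup M] [Module F M]
    [AddCommGroup N] [Module F N] [FiniteDimensional F M]
    (π : M →ₗ[F] N) (S : Submodule F M) :
    finrank F (S.map π) + finrank F (LinearMap.ker π ⊓ S : Submodule F M) = finrank F S := by
  have h := LinearMap.finrank_range_add_finrank_ker (π.domRestrict S)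
  rw [LinearMap.range_domRestrict] at h
  rw [← h, LinearMap.ker_domRestrict]
  congr 1
  have e1 : Submodule.comap S.subtype (LinearMap.ker π)
      = Submodule.comap S.subtype (LinearMap.ker π ⊓ S) := by
    ext x; simp [x.2]
  rw [e1]
  exact (Submodule.comapSubtypeEquivOfLe inf_le_right).finrank_eq.symm

private lemma rank_fromRows_zero_left (B : Matrix (Fin ν₂) (Fin μ₂) F) :
    (fromRows (0 : Matrix (Fin ν₁) (Fin μ₂) F) B).rank = B.rank := by
  apply le_antisymm
  · have : fromRows (0 : Matrix (Fin ν₁) (Fin μ₂) F) B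
        = fromRows (0 : Matrix (Fin ν₁) (Fin ν₂) F) (1 : Matrix (Fin ν₂) (Fin ν₂) F) * B := by
      simp
    rw [this]
    exact rank_mul_le_right _ _
  · have h2 := rank_mul_le_right (fromCols (0 : Matrix (Fin ν₂) (Fin ν₁) F) 1)
      (fromRows (0 : Matrix (Fin ν₁) (Fin μ₂) F) B)
    rwa [fromCols_mul_fromRows, Matrix.zero_mul, Matrix.one_mul, zero_add] at h2

end MinRankAux

/-- Minimal rank of the 2×2 lower-triangular partial block matrix
`[[T₁₁, ?],[T₂₁, T₂₂]]` equals
`rank [T₁₁; T₂₁] + rank [T₂₁ T₂₂] − rank T₂₁`. -/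
theorem minRank_two_by_two {F : Type*} [Field F] {ν₁ ν₂ μ₁ μ₂ : ℕ}
    (T₁₁ : Matrix (Fin ν₁) (Fin μ₁) F) (T₂₁ : Matrix (Fin ν₂) (Fin μ₁) F)
    (T₂₂ : Matrix (Fin ν₂) (Fin μ₂) F) :
    sInf {r : ℕ | ∃ X : Matrix (Fin ν₁) (Fin μ₂) F,
        (Matrix.fromBlocks T₁₁ X T₂₁ T₂₂).rank = r} =
      (Matrix.fromRows T₁₁ T₂₁).rank + (Matrix.fromCols T₂₁ T₂₂).rank
        - T₂₁.rank := by
  obtain ⟨G, hG⟩ := exists_genInv T₂₁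
  set B' : Matrix (Fin ν₂) (Fin μ₂) F := T₂₂ - T₂₁ * G * T₂₂ with hB'
  have hCGB' : T₂₁ * G * B' = 0 := by
    rw [hB', Matrix.mul_sub]
    rw [show T₂₁ * G * (T₂₁ * G * T₂₂) = T₂₁ * G * T₂₁ * (G * T₂₂) by
      simp only [Matrix.mul_assoc]]
    rw [hG, Matrix.mul_assoc, sub_self]
  -- disjointness of column spaces of T₂₁ and B'
  have hdisjCB' : LinearMap.range T₂₁.mulVecLin ⊓ LinearMap.range B'.mulVecLin = ⊥ := by
    rw [eq_bot_iff]
    rintro v ⟨⟨x, hx⟩, ⟨y, hy⟩⟩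
    simp only [mulVecLin_apply] at hx hy
    have h1 : (T₂₁ * G) *ᵥ v = v := by
      rw [← hx, mulVec_mulVec, Matrix.mul_assoc]
      rw [show T₂₁ * (G * T₂₁) = T₂₁ * G * T₂₁ from (Matrix.mul_assoc _ _ _).symm, hG]
    have h2 : (T₂₁ * G) *ᵥ v = 0 := by
      rw [← hy, mulVec_mulVec, hCGB', zero_mulVec]
    rw [Submodule.mem_bot, ← h1, h2]
  -- the invertible column-operation matrix
  have hU : IsUnit (fromBlocks (1 : Matrix (Fin μ₁) (Fin μ₁) F) (-(G * T₂₂))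
      (0 : Matrix (Fin μ₂) (Fin μ₁) F) (1 : Matrix (Fin μ₂) (Fin μ₂) F)).det := by
    rw [det_fromBlocks_zero₂₁, det_one, det_one, one_mul]
    exact isUnit_one
  -- rank of the full column block
  have hcols : (fromCols T₂₁ T₂₂).rank = T₂₁.rank + B'.rank := by
    have e : fromCols T₂₁ T₂₂ * (fromBlocks 1 (-(G * T₂₂)) 0 1 : Matrix (Fin μ₁ ⊕ Fin μ₂) (Fin μ₁ ⊕ Fin μ₂) F) = fromCols T₂₁ B' := by
      rw [fromCols_mul_fromBlocks]
      simp only [Matrix.mul_one, Matrix.mul_zero, add_zero, Matrix.mul_neg,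
        ← Matrix.mul_assoc, neg_add_eq_sub, hB']
    have hr := rank_mul_eq_left_of_isUnit_det _ (fromCols T₂₁ T₂₂) hU
    rw [e] at hr
    rw [← hr]
    have hd := Submodule.finrank_sup_add_finrank_inf_eq
      (LinearMap.range T₂₁.mulVecLin) (LinearMap.range B'.mulVecLin)
    rw [hdisjCB', finrank_bot, add_zero] at hd
    rw [Matrix.rank, range_fromCols_eq]
    exact hd
  -- disjointness of the two row-block ranges
  have hdisj2 : LinearMap.range (fromRows T₁₁ T₂₁).mulVecLin
      ⊓ LinearMap.range (fromRows (0 : Matrix (Fin ν₁) (Fin μ₂) F) B').mulVecLin = ⊥ := by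
    rw [eq_bot_iff]
    rintro v ⟨⟨x, hx⟩, ⟨y, hy⟩⟩
    simp only [mulVecLin_apply, fromRows_mulVec] at hx hy
    have hinr : T₂₁ *ᵥ x = B' *ᵥ y :=
      funext fun i => congrFun (hx.trans hy.symm) (Sum.inr i)
    have hC0 : T₂₁ *ᵥ x = 0 := by
      have mem : T₂₁ *ᵥ x ∈ LinearMap.range T₂₁.mulVecLin ⊓ LinearMap.range B'.mulVecLin :=
        ⟨⟨x, rfl⟩, ⟨y, hinr.symm⟩⟩
      rwa [hdisjCB', Submodule.mem_bot] at mem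
    rw [Submodule.mem_bot]
    funext i
    cases i with
    | inl i =>
      have := congrFun hy (Sum.inl i)
      simpa using this.symm
    | inr i =>
      have := congrFun hx (Sum.inr i)
      rw [hC0] at this
      simpa using this.symm
  -- rank of the completed matrix
  have hMrank : (fromBlocks T₁₁ (T₁₁ * G * T₂₂) T₂₁ T₂₂).rank
      = (fromRows T₁₁ T₂₁).rank + B'.rank := by
    have e : fromBlocks T₁₁ (T₁₁ * G * T₂₂) T₂₁ T₂₂ * (fromBlocks 1 (-(G * T₂₂)) 0 1 : Matrix (Fin μ₁ ⊕ Fin μ₂) (Fin μ₁ ⊕ Fin μ₂) F)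
        = fromBlocks T₁₁ 0 T₂₁ B' := by
      rw [fromBlocks_multiply]
      simp only [Matrix.mul_one, Matrix.mul_zero, add_zero, Matrix.mul_neg,
        ← Matrix.mul_assoc, neg_add_eq_sub, sub_self, hB']
    have hr := rank_mul_eq_left_of_isUnit_det _ (fromBlocks T₁₁ (T₁₁ * G * T₂₂) T₂₁ T₂₂) hU
    rw [e] at hr
    rw [← hr]
    have hd := Submodule.finrank_sup_add_finrank_inf_eq
      (LinearMap.range (fromRows T₁₁ T₂₁).mulVecLin)
      (LinearMap.range (fromRows (0 : Matrix (Fin ν₁) (Fin μ₂) F) B').mulVecLin)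
    rw [hdisj2, finrank_bot, add_zero] at hd
    rw [Matrix.rank, range_fromBlocks_eq, hd]
    rw [show finrank F (LinearMap.range (fromRows (0 : Matrix (Fin ν₁) (Fin μ₂) F) B').mulVecLin)
        = (fromRows (0 : Matrix (Fin ν₁) (Fin μ₂) F) B').rank from rfl]
    rw [rank_fromRows_zero_left]
    rfl
  -- lower bound for all completions
  have lb : ∀ X : Matrix (Fin ν₁) (Fin μ₂) F,
      (fromRows T₁₁ T₂₁).rank + (fromCols T₂₁ T₂₂).rank
        ≤ (fromBlocks T₁₁ X T₂₁ T₂₂).rank + T₂₁.rank := by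
    intro X
    set π : ((Fin ν₁ ⊕ Fin ν₂) → F) →ₗ[F] (Fin ν₂ → F) := LinearMap.funLeft F F Sum.inr with hπ
    set W := LinearMap.range (fromBlocks T₁₁ X T₂₁ T₂₂).mulVecLin with hW
    set V := LinearMap.range (fromRows T₁₁ T₂₁).mulVecLin with hV
    have hVW : V ≤ W := by
      rintro _ ⟨x, rfl⟩
      refine ⟨Sum.elim x 0, ?_⟩
      simp only [mulVecLin_apply, fromBlocks_mulVec, fromRows_mulVec]
      funext i; cases i <;> simp
    have hcompW : π ∘ₗ (fromBlocks T₁₁ X T₂₁ T₂₂).mulVecLin = (fromCols T₂₁ T₂₂).mulVecLin := by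
      refine LinearMap.ext fun v => ?_
      simp only [LinearMap.comp_apply, mulVecLin_apply, fromBlocks_mulVec, hπ,
        LinearMap.funLeft_apply]
      rw [← Sum.elim_comp_inl_inr v, fromCols_mulVec_sumElim]
      funext i; simp
    have hcompV : π ∘ₗ (fromRows T₁₁ T₂₁).mulVecLin = T₂₁.mulVecLin := by
      refine LinearMap.ext fun v => ?_
      simp only [LinearMap.comp_apply, mulVecLin_apply, fromRows_mulVec, hπ,
        LinearMap.funLeft_apply]
      funext i; simp
    have hmapW : W.map π = LinearMap.range (fromCols T₂₁ T₂₂).mulVecLin := by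
      rw [hW, ← LinearMap.range_comp, hcompW]
    have hmapV : V.map π = LinearMap.range T₂₁.mulVecLin := by
      rw [hV, ← LinearMap.range_comp, hcompV]
    have h1 := finrank_map_add_finrank_inf_ker π W
    have h2 := finrank_map_add_finrank_inf_ker π V
    have h3 : finrank F (LinearMap.ker π ⊓ V : Submodule F _)
        ≤ finrank F (LinearMap.ker π ⊓ W : Submodule F _) :=
      Submodule.finrank_mono (inf_le_inf_left _ hVW)
    have e1 : (fromCols T₂₁ T₂₂).rank = finrank F (W.map π) := by rw [hmapW]; rfl
    have e2 : T₂₁.rank = finrank F (V.map π) := by rw [hmapV]; rfl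
    have e3 : (fromBlocks T₁₁ X T₂₁ T₂₂).rank = finrank F W := rfl
    have e4 : (fromRows T₁₁ T₂₁).rank = finrank F V := rfl
    rw [e1, e2, e3, e4]
    omega
  have hmem : (Matrix.fromRows T₁₁ T₂₁).rank + (Matrix.fromCols T₂₁ T₂₂).rank - T₂₁.rank
      ∈ {r : ℕ | ∃ X : Matrix (Fin ν₁) (Fin μ₂) F,
        (Matrix.fromBlocks T₁₁ X T₂₁ T₂₂).rank = r} := by
    refine ⟨T₁₁ * G * T₂₂, ?_⟩
    rw [hMrank, hcols]
    omega
  apply le_antisymm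
  · exact Nat.sInf_le hmem
  · apply le_csInf ⟨_, hmem⟩
    rintro r ⟨X, rfl⟩
    have := lb X
    omega
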